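/- Let α be a positive irrational and q a positive integer. For all s with Re(s) > 1, g_{-αq}(s) = ∑_{n ∈ A_{-αq}} n^{-s} satisfies g_{-αq}(s) = ∑_{n≥1} R(α(n+q)) n^{-s} - J_α(s) + (1 - {αq})·ζ(s). -/

import Mathlib

/-- The odd 1-periodic sawtooth function: R(x) = {x} - 1/2 if x ∉ ℤ, R(x) = 0 if x ∈ ℤ. -/
noncomputable def sawR (x : ℝ) : ℝ := if Int.fract x = 0 then 0 else Int.fract x - 1 / 2

lemma fract_ne_zero_of_irrational {x : ℝ} (h : Irrational x) : Int.fract x ≠ 0 := by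
  intro h0
  have : x = (⌊x⌋ : ℝ) := by
    have := Int.fract_add_floor x
    rw [h0, zero_add] at this
    exact this.symm
  exact h.ne_int ⌊x⌋ this

open Classical in
theorem stmt_10 (α : ℝ) (hα : 0 < α) (hirr : Irrational α) (q : ℕ) (hq : 0 < q)
    (s : ℂ) (hs : 1 < s.re) :
    ∑' n : ℕ+, (if Int.fract (α * n) < Int.fract (-(α * q)) then (n : ℂ) ^ (-s) else 0)
      = (∑' n : ℕ+, (sawR (α * ((n : ℝ) + q)) : ℂ) * (n : ℂ) ^ (-s))
        - (∑' n : ℕ+, (sawR (α * (n : ℝ)) : ℂ) * (n : ℂ) ^ (-s))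
        + ((1 - Int.fract (α * q) : ℝ) : ℂ) * riemannZeta s := by
  have hsne : s ≠ 0 := fun h => by simp [h] at hs; linarith
  -- basic irrationality facts
  have hirrq : Irrational (α * q) := hirr.mul_natCast hq.ne'
  have hfq : Int.fract (α * q) ≠ 0 := fract_ne_zero_of_irrational hirrq
  have hfn : ∀ n : ℕ+, Int.fract (α * n) ≠ 0 := fun n =>
    fract_ne_zero_of_irrational (hirr.mul_natCast n.pos.ne')
  have hfnq : ∀ n : ℕ+, Int.fract (α * ((n : ℝ) + q)) ≠ 0 := by
    intro n
    have : α * ((n : ℝ) + q) = α * ((n : ℕ) + q : ℕ) := by push_cast; ring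
    rw [this]
    exact fract_ne_zero_of_irrational (hirr.mul_natCast (by positivity))
  -- summability
  have hgnat : Summable (fun n : ℕ => (n : ℂ) ^ (-s)) := by
    have := Complex.summable_one_div_nat_cpow.2 hs
    simpa [Complex.cpow_neg, one_div] using this
  have hg : Summable (fun n : ℕ+ => ((n : ℕ) : ℂ) ^ (-s)) :=
    hgnat.comp_injective (fun a b h => PNat.coe_injective h)
  have hbound : ∀ (c : ℕ+ → ℝ), (∀ n, |c n| ≤ 1) →
      Summable (fun n : ℕ+ => ((c n : ℝ) : ℂ) * ((n : ℕ) : ℂ) ^ (-s)) := by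
    intro c hc
    apply Summable.of_norm_bounded hg.norm
    intro n
    rw [norm_mul, Complex.norm_real]
    calc ‖c n‖ * ‖((n : ℕ) : ℂ) ^ (-s)‖ ≤ 1 * ‖((n : ℕ) : ℂ) ^ (-s)‖ := by
          apply mul_le_mul_of_nonneg_right (hc n) (norm_nonneg _)
      _ = ‖((n : ℕ) : ℂ) ^ (-s)‖ := one_mul _
  have hsawbd : ∀ x : ℝ, |sawR x| ≤ 1 := by
    intro x
    unfold sawR
    split
    · simp
    · rw [abs_le]
      constructor
      · have := Int.fract_nonneg x; linarith
      · have := Int.fract_lt_one x; linarith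
  have hS1 : Summable (fun n : ℕ+ => ((sawR (α * ((n : ℝ) + q)) : ℝ) : ℂ) * ((n : ℕ) : ℂ) ^ (-s)) :=
    hbound _ (fun n => hsawbd _)
  have hS2 : Summable (fun n : ℕ+ => ((sawR (α * (n : ℝ)) : ℝ) : ℂ) * ((n : ℕ) : ℂ) ^ (-s)) :=
    hbound _ (fun n => hsawbd _)
  have hS3 : Summable (fun n : ℕ+ => (((1 - Int.fract (α * q) : ℝ)) : ℂ) * ((n : ℕ) : ℂ) ^ (-s)) := by
    apply hbound _ (fun n => ?_)
    rw [abs_le]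
    have h1 := Int.fract_nonneg (α * q); have h2 := Int.fract_lt_one (α * q)
    constructor <;> linarith
  -- key pointwise identity
  have key : ∀ n : ℕ+,
      (if Int.fract (α * n) < Int.fract (-(α * q)) then ((n : ℕ) : ℂ) ^ (-s) else 0)
        = ((sawR (α * ((n : ℝ) + q)) : ℝ) : ℂ) * ((n : ℕ) : ℂ) ^ (-s)
          - ((sawR (α * (n : ℝ)) : ℝ) : ℂ) * ((n : ℕ) : ℂ) ^ (-s)
          + (((1 - Int.fract (α * q) : ℝ)) : ℂ) * ((n : ℕ) : ℂ) ^ (-s) := by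
    intro n
    have hreal : (if Int.fract (α * n) < Int.fract (-(α * q)) then (1:ℝ) else 0)
        = sawR (α * ((n : ℝ) + q)) - sawR (α * (n : ℝ)) + (1 - Int.fract (α * q)) := by
      rw [Int.fract_neg hfq]
      unfold sawR
      rw [if_neg (hfnq n), if_neg (hfn n)]
      have hsplit : α * ((n : ℝ) + q) = (Int.fract (α * n) + Int.fract (α * q))
          + ((⌊α * n⌋ + ⌊α * q⌋ : ℤ) : ℝ) := by
        push_cast
        rw [Int.fract, Int.fract]
        ring
      have hfA : Int.fract (α * ((n : ℝ) + q))
          = Int.fract (Int.fract (α * n) + Int.fract (α * q)) := by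
        rw [hsplit, Int.fract_add_intCast]
      have h1 := Int.fract_nonneg (α * n); have h2 := Int.fract_lt_one (α * n)
      have h3 := Int.fract_nonneg (α * q); have h4 := Int.fract_lt_one (α * q)
      by_cases hcase : Int.fract (α * n) + Int.fract (α * q) < 1
      · rw [if_pos (by linarith)]
        rw [hfA, Int.fract_eq_self.2 ⟨by linarith, hcase⟩]
        ring
      · rw [if_neg (by intro h; apply hcase; linarith)]
        push_neg at hcase
        have : Int.fract (Int.fract (α * n) + Int.fract (α * q))
            = Int.fract (α * n) + Int.fract (α * q) - 1 := by
          have heq : Int.fract (α * n) + Int.fract (α * q)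
              = (Int.fract (α * n) + Int.fract (α * q) - 1) + ((1 : ℤ) : ℝ) := by push_cast; ring
          rw [heq, Int.fract_add_intCast, Int.fract_eq_self.2 ⟨by linarith, by linarith⟩]
          push_cast
          ring
        rw [hfA, this]
        ring
    by_cases hcond : Int.fract (α * n) < Int.fract (-(α * q))
    · rw [if_pos hcond] at hreal ⊢
      have hC := congrArg (fun r : ℝ => (r : ℂ)) hreal.symm
      push_cast at hC ⊢
      linear_combination (-((n : ℕ) : ℂ) ^ (-s)) * hC
    · rw [if_neg hcond] at hreal ⊢
      have hC := congrArg (fun r : ℝ => (r : ℂ)) hreal.symm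
      push_cast at hC ⊢
      linear_combination (-((n : ℕ) : ℂ) ^ (-s)) * hC
  -- zeta as a sum over ℕ+
  have hz : ∑' n : ℕ+, ((n : ℕ) : ℂ) ^ (-s) = riemannZeta s := by
    have h1 : (∑' n : ℕ+, ((n : ℕ) : ℂ) ^ (-s))
        = ∑' n : ℕ, Set.indicator {m : ℕ | 0 < m} (fun m : ℕ => ((m : ℕ) : ℂ) ^ (-s)) n :=
      tsum_subtype {m : ℕ | 0 < m} (fun m : ℕ => ((m : ℕ) : ℂ) ^ (-s))
    rw [h1, zeta_eq_tsum_one_div_nat_cpow hs]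
    apply tsum_congr
    intro n
    by_cases hn : 0 < n
    · simp [Set.indicator_apply, Set.mem_setOf_eq, hn, Complex.cpow_neg, one_div]
    · have : n = 0 := by omega
      subst this
      simp [Set.indicator_apply, Complex.zero_cpow hsne]
  calc ∑' n : ℕ+, (if Int.fract (α * n) < Int.fract (-(α * q)) then ((n : ℕ) : ℂ) ^ (-s) else 0)
      = ∑' n : ℕ+, (((sawR (α * ((n : ℝ) + q)) : ℝ) : ℂ) * ((n : ℕ) : ℂ) ^ (-s)
          - ((sawR (α * (n : ℝ)) : ℝ) : ℂ) * ((n : ℕ) : ℂ) ^ (-s)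
          + (((1 - Int.fract (α * q) : ℝ)) : ℂ) * ((n : ℕ) : ℂ) ^ (-s)) := tsum_congr key
    _ = (∑' n : ℕ+, ((sawR (α * ((n : ℝ) + q)) : ℝ) : ℂ) * ((n : ℕ) : ℂ) ^ (-s)
          - ∑' n : ℕ+, ((sawR (α * (n : ℝ)) : ℝ) : ℂ) * ((n : ℕ) : ℂ) ^ (-s))
        + ∑' n : ℕ+, (((1 - Int.fract (α * q) : ℝ)) : ℂ) * ((n : ℕ) : ℂ) ^ (-s) := by
        rw [Summable.tsum_add (hS1.sub hS2) hS3, Summable.tsum_sub hS1 hS2]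
    _ = _ := by
        rw [tsum_mul_left, hz]
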